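/- Let n ≥ 2 and x ∈ W_n. Then ∑_{y ∈ W_{n−1}, y ≺ x} Δ_{n−1}(y) = Δ_n(x) / (n−1)!. Equivalently, the kernel Λⁿ_{n−1}(x, y) = (n−1)! · (Δ_{n−1}(y)/Δ_n(x)) · 1_{[y ≺ x]} defines a Markov (stochastic) link from W_n to W_{n−1}: it is nonnegative and for every x ∈ W_n with Δ_n(x) ≠ 0 (automatic on W_n), ∑_{y ∈ W_{n−1}} Λⁿ_{n−1}(x, y) = 1. -/

import Mathlib

open scoped Classical

/-- The Vandermonde determinant `Δ_n(x) = ∏_{1 ≤ i < j ≤ n} (x_j - x_i)` of an integer vector. -/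
def vandermondeProd {n : ℕ} (x : Fin n → ℤ) : ℤ :=
  ∏ p ∈ Finset.univ.filter (fun p : Fin n × Fin n => p.1 < p.2), (x p.2 - x p.1)

/-- `y` (one level down, `m` entries) interlaces with `x` (`m+1` entries):
`x_k < y_k ≤ x_{k+1}` for all `k`. -/
def Interlace {m : ℕ} (y : Fin m → ℤ) (x : Fin (m + 1) → ℤ) : Prop :=
  ∀ i : Fin m, x i.castSucc < y i ∧ y i ≤ x i.succ

/-- The Markov link `Λⁿ_{n-1}(x, y) = (n-1)! Δ_{n-1}(y)/Δ_n(x) · 1_{[y ≺ x]}`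
(here `n = m + 1`). -/
noncomputable def linkKernel {m : ℕ} (x : Fin (m + 1) → ℤ) (y : Fin m → ℤ) : ℚ :=
  (m.factorial : ℚ) * ((vandermondeProd y : ℚ) / (vandermondeProd x : ℚ)) *
    (if Interlace y x then 1 else 0)

open Finset Polynomial Matrix

lemma vandermondeProd_eq_det {n : ℕ} (x : Fin n → ℤ) :
    (vandermondeProd x : ℚ) = (Matrix.vandermonde fun i => (x i : ℚ)).det := by
  rw [Matrix.det_vandermonde, vandermondeProd]
  push_cast
  rw [← Finset.univ_product_univ, Finset.prod_filter,
    Finset.prod_product' (f := fun i j : Fin n => if i < j then ((x j : ℚ)) - ((x i : ℚ)) else 1)]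
  refine Finset.prod_congr rfl fun i _ => ?_
  rw [← Finset.prod_filter]
  refine Finset.prod_congr ?_ fun _ _ => rfl
  ext j; simp

lemma vandermondeProd_pos {n : ℕ} {x : Fin n → ℤ} (hx : StrictMono x) :
    0 < vandermondeProd x := by
  refine Finset.prod_pos fun p hp => ?_
  simp only [Finset.mem_filter] at hp
  exact sub_pos.mpr (hx hp.2)

lemma interlace_strictMono {m : ℕ} {x : Fin (m + 1) → ℤ} (hx : StrictMono x)
    {y : Fin m → ℤ} (hy : Interlace y x) : StrictMono y := by
  intro i j hij
  have h1 := (hy i).2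
  have h2 := (hy j).1
  have h3 : x i.succ ≤ x j.castSucc := by
    apply hx.monotone
    simp only [Fin.le_def, Fin.val_succ, Fin.coe_castSucc]
    exact hij
  omega

lemma desc_step (i : ℕ) (t : ℚ) :
    (descPochhammer ℚ (i + 1)).eval (t + 1) - (descPochhammer ℚ (i + 1)).eval t
      = ((i : ℚ) + 1) * (descPochhammer ℚ i).eval t := by
  have h1 : (descPochhammer ℚ (i + 1)).eval (t + 1) = (t + 1) * (descPochhammer ℚ i).eval t := by
    rw [descPochhammer_succ_left]
    simp [eval_comp]
  rw [h1, descPochhammer_succ_eval]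
  ring

lemma sum_Ioc_desc (i : ℕ) (a b : ℤ) (hb : a ≤ b) :
    ((i : ℚ) + 1) * ∑ t ∈ Finset.Ioc a b, (descPochhammer ℚ i).eval (t : ℚ)
      = (descPochhammer ℚ (i + 1)).eval ((b : ℚ) + 1)
        - (descPochhammer ℚ (i + 1)).eval ((a : ℚ) + 1) := by
  refine Int.le_induction (motive := fun b _ => ((i : ℚ) + 1) *
      ∑ t ∈ Finset.Ioc a b, (descPochhammer ℚ i).eval (t : ℚ)
      = (descPochhammer ℚ (i + 1)).eval ((b : ℚ) + 1)
        - (descPochhammer ℚ (i + 1)).eval ((a : ℚ) + 1)) ?_ ?_ b hb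
  · simp
  · intro b hb ih
    have hIoc : Finset.Ioc a (b + 1) = insert (b + 1) (Finset.Ioc a b) := by
      ext t; simp only [Finset.mem_Ioc, Finset.mem_insert]; omega
    have hnot : (b + 1) ∉ Finset.Ioc a b := by simp
    rw [hIoc, Finset.sum_insert hnot, mul_add, ih]
    have hstep := desc_step i ((b : ℚ) + 1)
    push_cast
    linarith [hstep]

lemma main_sum (m : ℕ) (x : Fin (m + 1) → ℤ) (hx : StrictMono x) :
    (vandermondeProd x : ℚ)
      = (m.factorial : ℚ) *
          ∑ y ∈ Fintype.piFinset (fun j : Fin m => Finset.Ioc (x j.castSucc) (x j.succ)),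
            (vandermondeProd y : ℚ) := by
  set u : Fin (m + 1) → ℚ := fun j => (x j : ℚ) + 1 with hu
  set A : Fin m → Finset ℤ := fun j => Finset.Ioc (x j.castSucc) (x j.succ) with hA
  -- Step A: each Δ(y) as a determinant of descPochhammer values
  have hdegm : ∀ i : Fin m, (descPochhammer ℚ (i : ℕ)).natDegree = (i : ℕ) :=
    fun i => descPochhammer_natDegree ℚ _
  have hmonm : ∀ i : Fin m, (descPochhammer ℚ (i : ℕ)).Monic :=
    fun i => monic_descPochhammer ℚ _
  have hAeq : ∀ y : Fin m → ℤ, (vandermondeProd y : ℚ)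
      = Matrix.detRowAlternating
          (fun j : Fin m => fun i : Fin m => (descPochhammer ℚ (i : ℕ)).eval ((y j : ℚ))) := by
    intro y
    rw [vandermondeProd_eq_det,
      Matrix.det_eval_matrixOfPolynomials_eq_det_vandermonde _
        (fun i : Fin m => descPochhammer ℚ (i : ℕ)) hdegm hmonm]
    rfl
  -- Step B: multilinearity in rows
  have hB : ∑ y ∈ Fintype.piFinset A, (vandermondeProd y : ℚ)
      = Matrix.detRowAlternating
          (fun j : Fin m => fun i : Fin m =>
            ∑ t ∈ A j, (descPochhammer ℚ (i : ℕ)).eval ((t : ℚ))) := by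
    have hfun : (fun j : Fin m => ∑ t ∈ A j,
          (fun i : Fin m => (descPochhammer ℚ (i : ℕ)).eval ((t : ℚ))))
        = (fun j : Fin m => fun i : Fin m =>
            ∑ t ∈ A j, (descPochhammer ℚ (i : ℕ)).eval ((t : ℚ))) := by
      funext j; ext i; simp
    rw [Finset.sum_congr rfl (fun y _ => hAeq y), ← hfun]
    exact ((Matrix.detRowAlternating (R := ℚ) (n := Fin m)).toMultilinearMap.map_sum_finset
        (fun (j : Fin m) (t : ℤ) => fun i : Fin m =>
          (descPochhammer ℚ (i : ℕ)).eval ((t : ℚ))) A).symm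
  -- Step C: telescope the sums
  have hab : ∀ j : Fin m, x j.castSucc ≤ x j.succ := fun j => (hx (Fin.castSucc_lt_succ (i := j))).le
  have hC : (fun j : Fin m => fun i : Fin m =>
        ∑ t ∈ A j, (descPochhammer ℚ (i : ℕ)).eval ((t : ℚ)))
      = fun j : Fin m => fun i : Fin m =>
          (((i : ℚ) + 1)⁻¹) *
            ((descPochhammer ℚ ((i : ℕ) + 1)).eval (u j.succ)
              - (descPochhammer ℚ ((i : ℕ) + 1)).eval (u j.castSucc)) := by
    funext j i
    have h := sum_Ioc_desc (i : ℕ) (x j.castSucc) (x j.succ) (hab j)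
    have hne : ((i : ℚ) + 1) ≠ 0 := by positivity
    field_simp [hu]
    linarith [h]
  -- the m×m difference matrix
  set M' : Matrix (Fin m) (Fin m) ℚ := Matrix.of fun j i =>
    (descPochhammer ℚ ((i : ℕ) + 1)).eval (u j.succ)
      - (descPochhammer ℚ ((i : ℕ) + 1)).eval (u j.castSucc) with hM'
  -- factor out the column scalars
  have hD : Matrix.detRowAlternating
        (fun j : Fin m => fun i : Fin m =>
          (((i : ℚ) + 1)⁻¹) * ((descPochhammer ℚ ((i : ℕ) + 1)).eval (u j.succ)
            - (descPochhammer ℚ ((i : ℕ) + 1)).eval (u j.castSucc)))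
      = (∏ i : Fin m, ((i : ℚ) + 1)⁻¹) * M'.det := by
    exact Matrix.det_mul_row (fun i : Fin m => ((i : ℚ) + 1)⁻¹) M'
  -- Step D: the (m+1)×(m+1) matrix and row reduction
  set N : Matrix (Fin (m + 1)) (Fin (m + 1)) ℚ := Matrix.of fun j i =>
    (descPochhammer ℚ (i : ℕ)).eval (u j) with hN
  set B : Matrix (Fin (m + 1)) (Fin (m + 1)) ℚ := Matrix.of fun j i =>
    Fin.cases (N 0 i) (fun j' => N j'.succ i - N j'.castSucc i) j with hBdef
  have hvandN : (Matrix.vandermonde u).det = N.det := by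
    exact Matrix.det_eval_matrixOfPolynomials_eq_det_vandermonde u
      (fun i : Fin (m + 1) => descPochhammer ℚ (i : ℕ))
      (fun i => descPochhammer_natDegree ℚ _) (fun i => monic_descPochhammer ℚ _)
  have hNB : N.det = B.det := by
    apply Matrix.det_eq_of_forall_row_eq_smul_add_pred (fun _ => 1)
    · intro j; simp [hBdef]
    · intro i j
      simp [hBdef]
  have hBM' : B.det = M'.det := by
    rw [Matrix.det_succ_column_zero]
    rw [Finset.sum_eq_single 0]
    · have hB00 : B 0 0 = 1 := by simp [hBdef, hN, descPochhammer_zero]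
      have hsub : B.submatrix (Fin.succAbove 0) Fin.succ = M' := by
        ext j i
        simp [hBdef, hN, hM', Fin.val_succ]
      rw [hB00, hsub]
      simp
    · intro b _ hb
      obtain ⟨j', rfl⟩ := Fin.exists_succ_eq.mpr hb
      have : B j'.succ 0 = 0 := by simp [hBdef, hN, descPochhammer_zero]
      rw [this]; ring
    · intro h; exact absurd (Finset.mem_univ 0) h
  -- Step E: vandermonde of u vs x
  have hux : (Matrix.vandermonde u).det = (Matrix.vandermonde fun i => (x i : ℚ)).det := by
    rw [hu]
    exact Matrix.det_vandermonde_add (fun i => (x i : ℚ)) 1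
  -- product of scalars
  have hprod : ∏ i : Fin m, ((i : ℚ) + 1) = (m.factorial : ℚ) := by
    rw [Fin.prod_univ_eq_prod_range (fun i => ((i : ℚ) + 1)) m]
    rw [← Finset.prod_range_add_one_eq_factorial]
    push_cast
    rfl
  have hfacne : (m.factorial : ℚ) ≠ 0 := by positivity
  -- Assemble
  rw [vandermondeProd_eq_det, ← hux, hvandN, hNB, hBM', hB, hC, hD]
  rw [Finset.prod_inv_distrib, hprod]
  field_simp

/-- For `x ∈ W_n` (with `n = m+1 ≥ 2`): `∑_{y ∈ W_{n-1}, y ≺ x} Δ_{n-1}(y) = Δ_n(x)/(n-1)!`;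
equivalently, the kernel `Λⁿ_{n-1}` is nonnegative and its rows sum to `1`, i.e. it is a
Markov link from `W_n` to `W_{n-1}`. -/
theorem link_row_sums (m : ℕ) (hm : 1 ≤ m) (x : Fin (m + 1) → ℤ) (hx : StrictMono x) :
    ((m.factorial : ℤ) *
        (∑ᶠ y ∈ {y : Fin m → ℤ | StrictMono y ∧ Interlace y x}, vandermondeProd y)
      = vandermondeProd x)
    ∧ (∀ y : Fin m → ℤ, 0 ≤ linkKernel x y)
    ∧ (∑ᶠ y ∈ {y : Fin m → ℤ | StrictMono y}, linkKernel x y) = 1 := by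
  have hxpos := vandermondeProd_pos hx
  set A : Fin m → Finset ℤ := fun j => Finset.Ioc (x j.castSucc) (x j.succ) with hA
  have hmem : ∀ y : Fin m → ℤ, y ∈ Fintype.piFinset A ↔ Interlace y x := by
    intro y
    simp only [Fintype.mem_piFinset, hA, Finset.mem_Ioc]
    exact ⟨fun h i => h i, fun h i => h i⟩
  have hset : {y : Fin m → ℤ | StrictMono y ∧ Interlace y x} = ↑(Fintype.piFinset A) := by
    ext y
    simp only [Set.mem_setOf_eq, Finset.coe_insert, Finset.mem_coe, hmem]
    exact ⟨fun h => h.2, fun h => ⟨interlace_strictMono hx h, h⟩⟩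
  have hmain := main_sum m x hx
  have part1 : (m.factorial : ℤ) *
      (∑ᶠ y ∈ {y : Fin m → ℤ | StrictMono y ∧ Interlace y x}, vandermondeProd y)
      = vandermondeProd x := by
    rw [hset, finsum_mem_coe_finset]
    exact_mod_cast hmain.symm
  refine ⟨part1, ?_, ?_⟩
  · intro y
    unfold linkKernel
    by_cases h : Interlace y x
    · rw [if_pos h, mul_one]
      have hy := vandermondeProd_pos (interlace_strictMono hx h)
      have h1 : (0:ℚ) < (vandermondeProd y : ℚ) := by exact_mod_cast hy
      have h2 : (0:ℚ) < (vandermondeProd x : ℚ) := by exact_mod_cast hxpos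
      positivity
    · rw [if_neg h, mul_zero]
  · have hxQ : (vandermondeProd x : ℚ) ≠ 0 := by
      exact_mod_cast hxpos.ne'
    have hsupp : {y : Fin m → ℤ | StrictMono y} ∩ Function.support (linkKernel x)
        = ↑(Fintype.piFinset A) ∩ Function.support (linkKernel x) := by
      ext y
      simp only [Set.mem_inter_iff, Set.mem_setOf_eq, Finset.mem_coe, hmem,
        Function.mem_support]
      constructor
      · rintro ⟨hsm, hne⟩
        refine ⟨?_, hne⟩
        by_contra h
        exact hne (by simp [linkKernel, if_neg h])
      · rintro ⟨hint, hne⟩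
        exact ⟨interlace_strictMono hx hint, hne⟩
    rw [finsum_mem_eq_sum_of_inter_support_eq (linkKernel x) hsupp]
    have : ∑ y ∈ Fintype.piFinset A, linkKernel x y
        = ∑ y ∈ Fintype.piFinset A,
            (m.factorial : ℚ) * (vandermondeProd y : ℚ) / (vandermondeProd x : ℚ) := by
      refine Finset.sum_congr rfl fun y hy => ?_
      rw [linkKernel, if_pos ((hmem y).mp hy), mul_one, mul_div_assoc]
    rw [this, ← Finset.sum_div, ← Finset.mul_sum, ← hmain, div_self hxQ]
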